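/- Every element of g(S) can be written uniquely in the form Σ_{i=0}^{m-1} z^i y_i with y_0, …, y_{m-1} ∈ L(g,σ). Consequently the S-linear map S ⊗_R L(g,σ) → g(S) determined by s ⊗ y ↦ s·y is an isomorphism of Lie algebras over S; that is, L(g,σ) is an S/R form of g(R) := g ⊗_k R. -/

import Mathlib

open scoped TensorProduct
open LaurentPolynomial

set_option maxHeartbeats 1000000
set_option synthInstance.maxHeartbeats 400000

noncomputable section

namespace LoopPaper

variable {k : Type*} [Field k] {g : Type*} [LieRing g] [LieAlgebra k g]

/-- A linear automorphism of a Lie algebra is a Lie algebra automorphism if it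
preserves brackets. -/
def IsLieAut (σ : g ≃ₗ[k] g) : Prop := ∀ x y : g, σ ⁅x, y⁆ = ⁅σ x, σ y⁆

theorem IsLieAut.one : IsLieAut (1 : g ≃ₗ[k] g) := fun _ _ => rfl

theorem IsLieAut.mul {σ τ : g ≃ₗ[k] g} (hσ : IsLieAut σ) (hτ : IsLieAut τ) :
    IsLieAut (σ * τ) := fun x y => by
  show σ (τ ⁅x, y⁆) = ⁅σ (τ x), σ (τ y)⁆
  rw [hτ, hσ]

theorem IsLieAut.inv {σ : g ≃ₗ[k] g} (hσ : IsLieAut σ) : IsLieAut σ⁻¹ := fun x y => by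
  apply σ.injective
  have h1 : ∀ z, σ (σ⁻¹ z) = z := fun z => σ.apply_symm_apply z
  rw [h1, hσ, h1, h1]

/-! ### The variable-scaling automorphism `z ↦ c z` of `k[z,z⁻¹]` -/

/-- The unit `c^n • z^n` of the Laurent polynomial ring. -/
def scaleUnit (c : kˣ) (n : ℤ) : (LaurentPolynomial k)ˣ where
  val := ((c ^ n : kˣ) : k) • T n
  inv := ((c ^ (-n) : kˣ) : k) • T (-n)
  val_inv := by
    rw [smul_mul_smul_comm, ← T_add, ← Units.val_mul, ← zpow_add, add_neg_cancel, zpow_zero,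
      Units.val_one, T_zero, one_smul]
  inv_val := by
    rw [smul_mul_smul_comm, ← T_add, ← Units.val_mul, ← zpow_add, neg_add_cancel, zpow_zero,
      Units.val_one, T_zero, one_smul]

/-- The homomorphism `n ↦ c^n • z^n` from `ℤ` to the units of `k[z,z⁻¹]`. -/
def scaleUnitHom (c : kˣ) : Multiplicative ℤ →* (LaurentPolynomial k)ˣ where
  toFun n := scaleUnit c n.toAdd
  map_one' := Units.ext (by
    show ((c ^ (0 : ℤ) : kˣ) : k) • T (0 : ℤ) = 1
    rw [zpow_zero, Units.val_one, T_zero, one_smul])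
  map_mul' a b := Units.ext (by
    show ((c ^ (a.toAdd + b.toAdd) : kˣ) : k) • T (a.toAdd + b.toAdd) =
      (((c ^ a.toAdd : kˣ) : k) • T a.toAdd) * (((c ^ b.toAdd : kˣ) : k) • T b.toAdd)
    rw [smul_mul_smul_comm, ← T_add, ← Units.val_mul, ← zpow_add])

/-- The `k`-algebra endomorphism of `k[z,z⁻¹]` with `z ↦ c z`. -/
def scaleVar (c : kˣ) : LaurentPolynomial k →ₐ[k] LaurentPolynomial k :=
  AddMonoidAlgebra.lift k (LaurentPolynomial k) ℤ ((Units.coeHom _).comp (scaleUnitHom c))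

theorem scaleVar_T (c : kˣ) (n : ℤ) : scaleVar c (T n) = ((c ^ n : kˣ) : k) • T n := by
  have h : (T n : LaurentPolynomial k) = AddMonoidAlgebra.of k ℤ (Multiplicative.ofAdd n) := rfl
  rw [h, scaleVar, AddMonoidAlgebra.lift_of]
  rfl

theorem scaleVar_comp (c d : kˣ) :
    (scaleVar c).comp (scaleVar d) = scaleVar (k := k) (c * d) := by
  apply AddMonoidAlgebra.algHom_ext
  intro n
  have hT : (AddMonoidAlgebra.single n 1 : LaurentPolynomial k) = T n := rfl
  simp only [AlgHom.coe_comp, Function.comp_apply, hT]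
  rw [scaleVar_T, map_smul, scaleVar_T, smul_smul, scaleVar_T]
  congr 1
  rw [mul_zpow, Units.val_mul, mul_comm]
  exact Subsingleton.elim _ _

theorem scaleVar_id : scaleVar (1 : kˣ) = AlgHom.id k (LaurentPolynomial k) := by
  apply AddMonoidAlgebra.algHom_ext
  intro n
  have hT : (AddMonoidAlgebra.single n 1 : LaurentPolynomial k) = T n := rfl
  simp only [hT, AlgHom.coe_id, id_eq]
  rw [scaleVar_T, one_zpow, Units.val_one, one_smul]
  exact Subsingleton.elim _ _

/-- The `k`-algebra automorphism of `k[z,z⁻¹]` with `z ↦ c z`. -/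
def scaleVarEquiv (c : kˣ) : LaurentPolynomial k ≃ₐ[k] LaurentPolynomial k :=
  AlgEquiv.ofAlgHom (scaleVar c) (scaleVar c⁻¹)
    (by rw [scaleVar_comp, mul_inv_cancel, scaleVar_id])
    (by rw [scaleVar_comp, inv_mul_cancel, scaleVar_id])

theorem scaleVarEquiv_apply (c : kˣ) (p : LaurentPolynomial k) :
    scaleVarEquiv c p = scaleVar c p := rfl


/-- `R = k[t,t⁻¹]`, identified with the `k`-subalgebra of `S = k[z,z⁻¹]` generated by
`t = z^m` and `t⁻¹ = z^{-m}`. -/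
def Rsub (k : Type*) [Field k] (m : ℕ) : Subalgebra k (LaurentPolynomial k) :=
  Algebra.adjoin k {T (m : ℤ), T (-(m : ℤ))}

/-- `g(S) = g ⊗_k S` is a Lie algebra over `k` (by restriction from `S`). -/
instance instLieAlgebraTensorBase : LieAlgebra k (LaurentPolynomial k ⊗[k] g) where
  lie_smul c x y := by
    have h := lie_smul (algebraMap k (LaurentPolynomial k) c) x y
    rwa [algebraMap_smul, algebraMap_smul] at h

/-- The underlying submodule `⊕_{i ∈ ℤ} g_ī ⊗ z^i` of the loop algebra. -/
def loopCarrier (ζ : k) (σ : g ≃ₗ[k] g) : Submodule k (LaurentPolynomial k ⊗[k] g) :=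
  Submodule.span k {p | ∃ (i : ℤ) (x : g), σ x = ζ ^ i • x ∧ p = T i ⊗ₜ[k] x}

theorem loop_lie_mem {ζ : k} (hζ0 : ζ ≠ 0) {σ : g ≃ₗ[k] g} (hbr : IsLieAut σ)
    {x y : LaurentPolynomial k ⊗[k] g} (hx : x ∈ loopCarrier ζ σ) (hy : y ∈ loopCarrier ζ σ) :
    ⁅x, y⁆ ∈ loopCarrier ζ σ := by
  have key : ∀ p ∈ {p : LaurentPolynomial k ⊗[k] g |
      ∃ (i : ℤ) (x : g), σ x = ζ ^ i • x ∧ p = T i ⊗ₜ[k] x},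
      ∀ q, q ∈ loopCarrier ζ σ → ⁅p, q⁆ ∈ loopCarrier ζ σ := by
    rintro p ⟨i, a, ha, rfl⟩ q hq
    unfold loopCarrier at hq ⊢
    induction hq using Submodule.span_induction with
    | mem q hq =>
      obtain ⟨j, b, hb, rfl⟩ := hq
      rw [LieAlgebra.ExtendScalars.bracket_tmul, ← T_add]
      refine Submodule.subset_span ⟨i + j, ⁅a, b⁆, ?_, rfl⟩
      rw [hbr, ha, hb, smul_lie, lie_smul, smul_smul, ← zpow_add₀ hζ0]
    | zero =>
      have h0 : ⁅(T i ⊗ₜ[k] a : LaurentPolynomial k ⊗[k] g), (0 : LaurentPolynomial k ⊗[k] g)⁆ = 0 :=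
        lie_zero (T i ⊗ₜ[k] a : LaurentPolynomial k ⊗[k] g)
      rw [h0]; exact zero_mem _
    | add q r _ _ hq hr =>
      have h0 : ⁅(T i ⊗ₜ[k] a : LaurentPolynomial k ⊗[k] g), q + r⁆ = ⁅T i ⊗ₜ[k] a, q⁆ + ⁅T i ⊗ₜ[k] a, r⁆ :=
        lie_add (T i ⊗ₜ[k] a : LaurentPolynomial k ⊗[k] g) q r
      rw [h0]; exact add_mem hq hr
    | smul c q _ hq =>
      have h0 : ⁅(T i ⊗ₜ[k] a : LaurentPolynomial k ⊗[k] g), c • q⁆ = c • ⁅T i ⊗ₜ[k] a, q⁆ :=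
        lie_smul c (T i ⊗ₜ[k] a : LaurentPolynomial k ⊗[k] g) q
      rw [h0]; exact Submodule.smul_mem _ _ hq
  unfold loopCarrier at hx
  induction hx using Submodule.span_induction with
  | mem p hp => exact key p hp y hy
  | zero =>
    have h0 : ⁅(0 : LaurentPolynomial k ⊗[k] g), y⁆ = 0 := zero_lie y
    rw [h0]; exact zero_mem _
  | add p r _ _ hp hr =>
    have h0 : ⁅p + r, y⁆ = ⁅p, y⁆ + ⁅r, y⁆ := add_lie p r y
    rw [h0]; exact add_mem hp hr
  | smul c p _ hp =>
    have h0 : ⁅c • p, y⁆ = c • ⁅p, y⁆ := smul_lie c p y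
    rw [h0]; exact Submodule.smul_mem _ _ hp

/-- The loop algebra `L(g,σ) = ⊕_{i ∈ ℤ} g_ī ⊗ z^i`, a Lie subalgebra (over `k`)
of `g(S) = g ⊗_k S`.  Here `m` is a period of `σ` and `ζ` is the chosen root of unity. -/
def loopAlgebra (m : ℕ) (ζ : k) (hζ0 : ζ ≠ 0) (hζm : ζ ^ m = 1) (σ : g ≃ₗ[k] g)
    (hbr : IsLieAut σ) (hσ : σ ^ m = 1) : LieSubalgebra k (LaurentPolynomial k ⊗[k] g) where
  __ := loopCarrier ζ σ
  lie_mem' := fun hx hy => loop_lie_mem hζ0 hbr hx hy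

theorem mem_loopAlgebra_iff {m : ℕ} {ζ : k} {hζ0 : ζ ≠ 0} {hζm : ζ ^ m = 1} {σ : g ≃ₗ[k] g}
    {hbr : IsLieAut σ} {hσ : σ ^ m = 1} {x : LaurentPolynomial k ⊗[k] g} :
    x ∈ loopAlgebra m ζ hζ0 hζm σ hbr hσ ↔ x ∈ loopCarrier ζ σ := Iff.rfl

theorem T_smul_loop {ζ : k} (hζ0 : ζ ≠ 0) {σ : g ≃ₗ[k] g} {j : ℤ} (hj : ζ ^ j = 1)
    {x : LaurentPolynomial k ⊗[k] g} (hx : x ∈ loopCarrier ζ σ) :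
    (T j : LaurentPolynomial k) • x ∈ loopCarrier ζ σ := by
  unfold loopCarrier at hx ⊢
  induction hx using Submodule.span_induction with
  | mem p hp =>
    obtain ⟨i, a, ha, rfl⟩ := hp
    rw [TensorProduct.smul_tmul', smul_eq_mul, ← T_add]
    refine Submodule.subset_span ⟨j + i, a, ?_, rfl⟩
    rw [ha, zpow_add₀ hζ0, hj, one_mul]
  | zero => rw [smul_zero]; exact zero_mem _
  | add p q _ _ hp hq => rw [smul_add]; exact add_mem hp hq
  | smul c p _ hp =>
    rw [smul_comm]
    exact Submodule.smul_mem _ _ hp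

theorem Rsub_smul_loop {m : ℕ} {ζ : k} (hζ0 : ζ ≠ 0) (hζm : ζ ^ m = 1) {σ : g ≃ₗ[k] g}
    {r : LaurentPolynomial k} (hr : r ∈ Rsub k m) :
    ∀ x ∈ loopCarrier ζ σ, r • x ∈ loopCarrier (g := g) ζ σ := by
  induction hr using Algebra.adjoin_induction with
  | mem s hs =>
    intro x hx
    rcases hs with rfl | rfl
    · refine T_smul_loop hζ0 ?_ hx
      rw [zpow_natCast, hζm]
    · refine T_smul_loop hζ0 ?_ hx
      rw [zpow_neg, zpow_natCast, hζm, inv_one]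
  | algebraMap c =>
    intro x hx
    rw [algebraMap_smul]
    exact Submodule.smul_mem _ _ hx
  | add r s _ _ hr hs =>
    intro x hx
    rw [add_smul]
    exact add_mem (hr x hx) (hs x hx)
  | mul r s _ _ hr hs =>
    intro x hx
    rw [mul_smul]
    exact hr _ (hs x hx)


/-- The action of `R` on the loop algebra. -/
instance loopSMulR {m : ℕ} {ζ : k} {hζ0 : ζ ≠ 0} {hζm : ζ ^ m = 1} {σ : g ≃ₗ[k] g}
    {hbr : IsLieAut σ} {hσ : σ ^ m = 1} :
    SMul ↥(Rsub k m) ↥(loopAlgebra m ζ hζ0 hζm σ hbr hσ) where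
  smul r x := ⟨(r : LaurentPolynomial k) • (x : LaurentPolynomial k ⊗[k] g),
    Rsub_smul_loop hζ0 hζm r.2 _ x.2⟩

theorem loop_smul_coe {m : ℕ} {ζ : k} {hζ0 : ζ ≠ 0} {hζm : ζ ^ m = 1} {σ : g ≃ₗ[k] g}
    {hbr : IsLieAut σ} {hσ : σ ^ m = 1} (r : ↥(Rsub k m))
    (x : ↥(loopAlgebra m ζ hζ0 hζm σ hbr hσ)) :
    ((r • x : ↥(loopAlgebra m ζ hζ0 hζm σ hbr hσ)) : LaurentPolynomial k ⊗[k] g)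
      = (r : LaurentPolynomial k) • (x : LaurentPolynomial k ⊗[k] g) := rfl

/-- The loop algebra is a module over `R = k[t,t⁻¹] ⊆ k[z,z⁻¹]`. -/
instance loopModuleR {m : ℕ} {ζ : k} {hζ0 : ζ ≠ 0} {hζm : ζ ^ m = 1} {σ : g ≃ₗ[k] g}
    {hbr : IsLieAut σ} {hσ : σ ^ m = 1} :
    Module ↥(Rsub k m) ↥(loopAlgebra m ζ hζ0 hζm σ hbr hσ) where
  one_smul x := Subtype.ext (by simp [loop_smul_coe])
  mul_smul r s x := Subtype.ext (by simp [loop_smul_coe, mul_smul])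
  smul_zero r := Subtype.ext (by simp [loop_smul_coe])
  smul_add r x y := Subtype.ext (by simp [loop_smul_coe, smul_add])
  add_smul r s x := Subtype.ext (by simp [loop_smul_coe, add_smul])
  zero_smul x := Subtype.ext (by simp [loop_smul_coe])


/-- The inclusion of the loop algebra in `g(S)`, as an `R`-linear map. -/
def loopIncl (m : ℕ) (ζ : k) (hζ0 : ζ ≠ 0) (hζm : ζ ^ m = 1) (σ : g ≃ₗ[k] g)
    (hbr : IsLieAut σ) (hσ : σ ^ m = 1) :
    ↥(loopAlgebra m ζ hζ0 hζm σ hbr hσ) →ₗ[↥(Rsub k m)] (LaurentPolynomial k ⊗[k] g) where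
  toFun x := ↑x
  map_add' _ _ := rfl
  map_smul' _ _ := rfl

/-- The eigenspace `{x ∈ g : σ(x) = c x}`. -/
def eigSpace (σ : g ≃ₗ[k] g) (c : k) : Submodule k g where
  carrier := {x | σ x = c • x}
  add_mem' := by
    intro x y hx hy
    show σ (x + y) = c • (x + y)
    rw [map_add, hx, hy, smul_add]
  zero_mem' := by
    show σ 0 = c • (0 : g)
    rw [map_zero, smul_zero]
  smul_mem' := by
    intro t x hx
    show σ (t • x) = c • t • x
    rw [map_smul, hx, smul_comm]

/-- The `R`-algebra automorphism `id ⊗ ι_i` of `g(S)`, where `ι_i(z) = ζ^i z`. -/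
def idTensorIota (ζ : k) (hζ0 : ζ ≠ 0) (i : ℤ) :
    (LaurentPolynomial k ⊗[k] g) ≃ₗ[k] (LaurentPolynomial k ⊗[k] g) :=
  TensorProduct.congr (scaleVarEquiv (Units.mk0 ζ hζ0 ^ i)).toLinearEquiv (LinearEquiv.refl k g)

/-- A `k`-linear automorphism of `g(S)` lies in `Aut_S(g(S))` if it is `S`-linear and
preserves brackets. -/
def IsSAut (f : (LaurentPolynomial k ⊗[k] g) ≃ₗ[k] (LaurentPolynomial k ⊗[k] g)) : Prop :=
  (∀ (s : LaurentPolynomial k) (x : LaurentPolynomial k ⊗[k] g), f (s • x) = s • f x) ∧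
    ∀ x y : LaurentPolynomial k ⊗[k] g, f ⁅x, y⁆ = ⁅f x, f y⁆

/-- The action of `ī ∈ Γ = ℤ/mℤ` on `Aut_S(g(S))`:  `ⁱτ = (id ⊗ ι_i) ∘ τ ∘ (id ⊗ ι_i)⁻¹`. -/
def gammaAct (ζ : k) (hζ0 : ζ ≠ 0) (i : ℤ)
    (τ : (LaurentPolynomial k ⊗[k] g) ≃ₗ[k] (LaurentPolynomial k ⊗[k] g)) :
    (LaurentPolynomial k ⊗[k] g) ≃ₗ[k] (LaurentPolynomial k ⊗[k] g) :=
  ((idTensorIota (g := g) ζ hζ0 i).symm.trans τ).trans (idTensorIota ζ hζ0 i)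

/-- A family `u_ī`, `ī ∈ Γ = ℤ/mℤ` (presented as a function on integer representatives),
is a 1-cocycle on `Γ` in `Aut_S(g(S))` if each `u_i` is an `S`-algebra automorphism,
`u_i` depends only on `i` mod `m`, and `u_{i+j} = u_i ∘ ⁱ(u_j)`. -/
def IsCocycle (m : ℕ) (ζ : k) (hζ0 : ζ ≠ 0)
    (u : ℤ → ((LaurentPolynomial k ⊗[k] g) ≃ₗ[k] (LaurentPolynomial k ⊗[k] g))) : Prop :=
  (∀ i : ℤ, IsSAut (u i)) ∧ (∀ i j : ℤ, (i : ZMod m) = (j : ZMod m) → u i = u j) ∧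
    ∀ i j : ℤ, u (i + j) = (gammaAct ζ hζ0 i (u j)).trans (u i)

/-- The fixed point set `g(S)_u = {x : (u_ī ∘ (id ⊗ ι_i)) x = x for all ī}` of a 1-cocycle. -/
def cocycleFixed (ζ : k) (hζ0 : ζ ≠ 0)
    (u : ℤ → ((LaurentPolynomial k ⊗[k] g) ≃ₗ[k] (LaurentPolynomial k ⊗[k] g))) :
    Set (LaurentPolynomial k ⊗[k] g) :=
  {x | ∀ i : ℤ, u i (idTensorIota ζ hζ0 i x) = x}



/-! ### Auxiliary development for Statement 5 -/

section Proof5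

/-- Multiplication by `s ∈ S` as a `k`-linear endomorphism of `g(S)`. -/
def mulL (s : LaurentPolynomial k) :
    (LaurentPolynomial k ⊗[k] g) →ₗ[k] (LaurentPolynomial k ⊗[k] g) where
  toFun x := s • x
  map_add' := smul_add s
  map_smul' c x := smul_comm s c x

@[simp] theorem mulL_apply (s : LaurentPolynomial k) (x : LaurentPolynomial k ⊗[k] g) :
    mulL s x = s • x := rfl

def piAux (m : ℕ) (ζ : k) (σ : g ≃ₗ[k] g) (j : ℤ) : g →ₗ[k] g :=
  (m : k)⁻¹ • ∑ a ∈ Finset.range m, ζ ^ (-j * (a : ℤ)) • ((σ ^ a : g ≃ₗ[k] g) : g →ₗ[k] g)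

theorem sigma_pow_eigen {ζ : k} {σ : g ≃ₗ[k] g} {j : ℤ} {x : g} (hx : σ x = ζ ^ j • x)
    (hζ0 : ζ ≠ 0) : ∀ a : ℕ, (σ ^ a) x = ζ ^ (j * a) • x := by
  intro a
  induction a with
  | zero => simp
  | succ a ih =>
    rw [pow_succ']
    show σ ((σ ^ a) x) = _
    rw [ih, map_smul, hx, smul_smul, ← zpow_add₀ hζ0]
    congr 1
    push_cast
    ring

theorem zsum_root (m : ℕ) (hm : 0 < m) {ζ : k} (hζ : IsPrimitiveRoot ζ m) (c : ℤ) :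
    ∑ a ∈ Finset.range m, ζ ^ (c * (a : ℤ)) = if ((m : ℤ) ∣ c) then (m : k) else 0 := by
  have hζ0 : ζ ≠ 0 := hζ.ne_zero hm.ne'
  have hconv : ∀ a : ℕ, ζ ^ (c * (a : ℤ)) = (ζ ^ c) ^ a := by
    intro a; rw [zpow_mul, zpow_natCast]
  simp only [hconv]
  by_cases hdvd : (m : ℤ) ∣ c
  · rw [if_pos hdvd]
    have h1 : ζ ^ c = 1 := (hζ.zpow_eq_one_iff_dvd c).mpr hdvd
    simp [h1]
  · rw [if_neg hdvd]
    have h1 : ζ ^ c ≠ 1 := fun h => hdvd ((hζ.zpow_eq_one_iff_dvd c).mp h)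
    have h2 : (ζ ^ c) ^ m = 1 := by
      rw [← zpow_natCast, ← zpow_mul, mul_comm, zpow_mul, zpow_natCast, hζ.pow_eq_one, one_zpow]
    have := geom_sum_mul (ζ ^ c) m
    rw [h2, sub_self] at this
    rcases mul_eq_zero.mp this with h | h
    · exact h
    · exact absurd (sub_eq_zero.mp h) h1

theorem piAux_apply (m : ℕ) (ζ : k) (σ : g ≃ₗ[k] g) (j : ℤ) (v : g) :
    piAux m ζ σ j v = (m : k)⁻¹ • ∑ a ∈ Finset.range m, ζ ^ (-j * (a : ℤ)) • (σ ^ a) v := by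
  simp [piAux, LinearMap.smul_apply, LinearMap.sum_apply]

/-- `piAux j v` lies in the `ζ^j`-eigenspace of `σ`. -/
theorem piAux_eigen (m : ℕ) {ζ : k} (hζ0 : ζ ≠ 0) (hζm : ζ ^ (m : ℕ) = 1)
    {σ : g ≃ₗ[k] g} (hσ : σ ^ m = 1) (j : ℤ) (v : g) :
    σ (piAux m ζ σ j v) = ζ ^ j • piAux m ζ σ j v := by
  set f : ℕ → g := fun a => ζ ^ (-j * (a : ℤ)) • (σ ^ a) v with hf
  have hfm : f m = f 0 := by
    simp only [hf, hσ]
    have h1 : ((1 : g ≃ₗ[k] g)) v = v := rfl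
    have h2 : ((σ ^ 0 : g ≃ₗ[k] g)) v = v := rfl
    rw [h1, h2]
    congr 1
    rw [Nat.cast_zero, mul_zero, zpow_zero]
    have : ζ ^ (-j * (m : ℤ)) = (ζ ^ ((m : ℕ) : ℤ)) ^ (-j) := by
      rw [← zpow_mul]; congr 1; ring
    rw [this, zpow_natCast, hζm, one_zpow]
  have hshift : ∑ a ∈ Finset.range m, f (a + 1) = ∑ a ∈ Finset.range m, f a := by
    have e1 := Finset.sum_range_succ' f m
    have e2 := Finset.sum_range_succ f m
    rw [e2, hfm] at e1
    -- e1 : ∑ range m f + f 0 = ∑ range m (f (·+1)) + f 0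
    exact add_right_cancel e1.symm
  rw [piAux_apply, map_smul, map_sum]
  have hterm : ∀ a : ℕ, σ (f a) = ζ ^ j • f (a + 1) := by
    intro a
    have : σ ((σ ^ a) v) = (σ ^ (a + 1)) v := by rw [pow_succ']; rfl
    rw [hf]
    simp only []
    rw [map_smul, this, smul_smul, ← zpow_add₀ hζ0]
    congr 1
    push_cast
    ring
  calc (m : k)⁻¹ • ∑ a ∈ Finset.range m, σ (f a)
      = (m : k)⁻¹ • ∑ a ∈ Finset.range m, ζ ^ j • f (a + 1) := by
        congr 1; exact Finset.sum_congr rfl fun a _ => hterm a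
    _ = ζ ^ j • ((m : k)⁻¹ • ∑ a ∈ Finset.range m, f (a + 1)) := by
        rw [← Finset.smul_sum, smul_comm]
    _ = ζ ^ j • ((m : k)⁻¹ • ∑ a ∈ Finset.range m, f a) := by rw [hshift]

/-- `piAux l` acts on a `ζ^j`-eigenvector as the indicator of `l ≡ j (mod m)`. -/
theorem piAux_of_eigen (m : ℕ) (hm : 0 < m) {ζ : k} (hζ : IsPrimitiveRoot ζ m)
    [CharZero k] {σ : g ≃ₗ[k] g} {j : ℤ} {v : g} (hv : σ v = ζ ^ j • v) (l : ℤ) :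
    piAux m ζ σ l v = if ((l : ZMod m) = (j : ZMod m)) then v else 0 := by
  have hζ0 : ζ ≠ 0 := hζ.ne_zero hm.ne'
  rw [piAux_apply]
  have hterm : ∀ a : ℕ, ζ ^ (-l * (a : ℤ)) • (σ ^ a) v = ζ ^ ((j - l) * (a : ℤ)) • v := by
    intro a
    rw [sigma_pow_eigen hv hζ0 a, smul_smul, ← zpow_add₀ hζ0]
    congr 1
    ring
  rw [Finset.sum_congr rfl fun a _ => hterm a, ← Finset.sum_smul,
    zsum_root m hm hζ (j - l)]
  have hcond : ((l : ZMod m) = (j : ZMod m)) ↔ ((m : ℤ) ∣ (j - l)) := by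
    rw [ZMod.intCast_eq_intCast_iff, Int.modEq_iff_dvd]
  by_cases hd : (m : ℤ) ∣ (j - l)
  · rw [if_pos hd, if_pos (hcond.mpr hd), smul_smul,
      inv_mul_cancel₀ (by exact_mod_cast hm.ne' : (m : k) ≠ 0), one_smul]
  · rw [if_neg hd, if_neg (fun h => hd (hcond.mp h)), zero_smul, smul_zero]

/-- window sum: `∑_{i<m} piAux (n - i) = id`. -/
theorem piAux_window (m : ℕ) (hm : 0 < m) {ζ : k} (hζ : IsPrimitiveRoot ζ m)
    [CharZero k] (σ : g ≃ₗ[k] g) (n : ℤ) (v : g) :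
    ∑ i ∈ Finset.range m, piAux m ζ σ (n - (i : ℤ)) v = v := by
  have hζ0 : ζ ≠ 0 := hζ.ne_zero hm.ne'
  have hswap : ∑ i ∈ Finset.range m, piAux m ζ σ (n - (i : ℤ)) v
      = (m : k)⁻¹ • ∑ a ∈ Finset.range m,
          (∑ i ∈ Finset.range m, ζ ^ (-(n - (i : ℤ)) * (a : ℤ))) • (σ ^ a) v := by
    simp only [piAux_apply, ← Finset.smul_sum]
    congr 1
    rw [Finset.sum_comm]
    exact Finset.sum_congr rfl fun a _ => (Finset.sum_smul).symm
  rw [hswap]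
  have hinner : ∀ a ∈ Finset.range m,
      (∑ i ∈ Finset.range m, ζ ^ (-(n - (i : ℤ)) * (a : ℤ))) • (σ ^ a) v
        = if a = 0 then (m : k) • v else 0 := by
    intro a ha
    have hsum : ∑ i ∈ Finset.range m, ζ ^ (-(n - (i : ℤ)) * (a : ℤ))
        = ζ ^ (-n * (a : ℤ)) * ∑ i ∈ Finset.range m, ζ ^ ((a : ℤ) * (i : ℤ)) := by
      rw [Finset.mul_sum]
      refine Finset.sum_congr rfl fun i _ => ?_
      rw [← zpow_add₀ hζ0]
      congr 1
      ring
    rw [hsum, zsum_root m hm hζ (a : ℤ)]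
    rcases Nat.eq_zero_or_pos a with rfl | hapos
    · simp
    · have hnd : ¬ ((m : ℤ) ∣ (a : ℤ)) := by
        have ha' := Finset.mem_range.mp ha
        rw [Int.natCast_dvd_natCast]
        intro hdd
        have := Nat.le_of_dvd hapos hdd
        omega
      rw [if_neg hnd, if_neg (by omega), mul_zero, zero_smul]
  rw [Finset.sum_congr rfl hinner, Finset.sum_ite_eq' (Finset.range m) 0,
    if_pos (Finset.mem_range.mpr hm), smul_smul,
    inv_mul_cancel₀ (by exact_mod_cast hm.ne' : (m : k) ≠ 0), one_smul]


/-- The component-extraction operator `D_i : g(S) → g(S)`,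
`T n ⊗ v ↦ T (n-i) ⊗ piAux (n-i) v`. -/
def Dmap (m : ℕ) (ζ : k) (hζ0 : ζ ≠ 0) (σ : g ≃ₗ[k] g) (i : ℤ) :
    (LaurentPolynomial k ⊗[k] g) →ₗ[k] (LaurentPolynomial k ⊗[k] g) :=
  (m : k)⁻¹ • ∑ a ∈ Finset.range m, ζ ^ (i * (a : ℤ)) •
    ((mulL (T (-i))) ∘ₗ TensorProduct.map
      ((scaleVar ((Units.mk0 ζ hζ0) ^ (-(a : ℤ)))).toLinearMap)
      ((σ ^ a : g ≃ₗ[k] g) : g →ₗ[k] g))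

theorem Dmap_tmul (m : ℕ) (ζ : k) (hζ0 : ζ ≠ 0) (σ : g ≃ₗ[k] g) (i n : ℤ) (v : g) :
    Dmap m ζ hζ0 σ i ((T n : LaurentPolynomial k) ⊗ₜ[k] v)
      = (T (n - i) : LaurentPolynomial k) ⊗ₜ[k] piAux m ζ σ (n - i) v := by
  rw [Dmap, piAux_apply, LinearMap.smul_apply, LinearMap.sum_apply,
    TensorProduct.tmul_smul, TensorProduct.tmul_sum]
  congr 1
  refine Finset.sum_congr rfl fun a _ => ?_
  rw [LinearMap.smul_apply, LinearMap.comp_apply, TensorProduct.map_tmul,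
    AlgHom.toLinearMap_apply, scaleVar_T]
  have hval : (((Units.mk0 ζ hζ0 ^ (-(a : ℤ))) ^ n : kˣ) : k) = ζ ^ (-(a : ℤ) * n) := by
    rw [Units.val_zpow_eq_zpow_val, Units.val_zpow_eq_zpow_val, ← zpow_mul]
    rfl
  rw [hval, mulL_apply, ← TensorProduct.smul_tmul',
    smul_comm (T (-i) : LaurentPolynomial k),
    TensorProduct.smul_tmul' (T (-i) : LaurentPolynomial k), smul_eq_mul, ← T_add,
    TensorProduct.tmul_smul, smul_smul, ← zpow_add₀ hζ0]
  have he : i * (a : ℤ) + -(a : ℤ) * n = -(n - i) * (a : ℤ) := by ring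
  have hn : -i + n = n - i := by ring
  rw [he, hn]
  rfl

/-- `g(S)` is spanned by the simple tensors `T n ⊗ v`. -/
theorem mem_span_Ttmul (x : LaurentPolynomial k ⊗[k] g) :
    x ∈ Submodule.span k {p : LaurentPolynomial k ⊗[k] g | ∃ (n : ℤ) (v : g),
      p = (T n : LaurentPolynomial k) ⊗ₜ[k] v} := by
  induction x using TensorProduct.induction_on with
  | zero => exact zero_mem _
  | add p q hp hq => exact add_mem hp hq
  | tmul s v =>
    induction s using AddMonoidAlgebra.induction_on with
    | of n => exact Submodule.subset_span ⟨n, v, rfl⟩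
    | add f h hf hh => rw [TensorProduct.add_tmul]; exact add_mem hf hh
    | smul r f hf => rw [← TensorProduct.smul_tmul']; exact Submodule.smul_mem _ _ hf

theorem Dmap_mem_loop (m : ℕ) (hm : 0 < m) {ζ : k} (hζ : IsPrimitiveRoot ζ m)
    (hζ0 : ζ ≠ 0) {σ : g ≃ₗ[k] g} (hσ : σ ^ m = 1) (i : ℤ)
    (x : LaurentPolynomial k ⊗[k] g) :
    Dmap m ζ hζ0 σ i x ∈ loopCarrier ζ σ := by
  have hx := mem_span_Ttmul x
  induction hx using Submodule.span_induction with
  | mem p hp =>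
    obtain ⟨n, v, rfl⟩ := hp
    rw [Dmap_tmul]
    exact Submodule.subset_span ⟨n - i, piAux m ζ σ (n - i) v,
      piAux_eigen m hζ0 hζ.pow_eq_one hσ (n - i) v, rfl⟩
  | zero => rw [map_zero]; exact zero_mem _
  | add p q _ _ hp hq => rw [map_add]; exact add_mem hp hq
  | smul c p _ hp => rw [map_smul]; exact Submodule.smul_mem _ _ hp

theorem sum_T_Dmap (m : ℕ) (hm : 0 < m) {ζ : k} (hζ : IsPrimitiveRoot ζ m) [CharZero k]
    (hζ0 : ζ ≠ 0) (σ : g ≃ₗ[k] g) (x : LaurentPolynomial k ⊗[k] g) :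
    ∑ i : Fin m, (T (i : ℤ) : LaurentPolynomial k) • Dmap m ζ hζ0 σ (i : ℤ) x = x := by
  have hx := mem_span_Ttmul x
  induction hx using Submodule.span_induction with
  | mem p hp =>
    obtain ⟨n, v, rfl⟩ := hp
    have hterm : ∀ i : Fin m,
        (T (i : ℤ) : LaurentPolynomial k) • Dmap m ζ hζ0 σ (i : ℤ) ((T n : LaurentPolynomial k) ⊗ₜ[k] v)
          = (T n : LaurentPolynomial k) ⊗ₜ[k] piAux m ζ σ (n - (i : ℤ)) v := by
      intro i
      rw [Dmap_tmul, TensorProduct.smul_tmul', smul_eq_mul, ← T_add]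
      have : (i : ℤ) + (n - (i : ℤ)) = n := by ring
      rw [this]
    rw [Finset.sum_congr rfl fun i _ => hterm i, ← TensorProduct.tmul_sum,
      Fin.sum_univ_eq_sum_range (fun j : ℕ => piAux m ζ σ (n - (j : ℤ)) v) m,
      piAux_window m hm hζ σ n v]
  | zero => simp
  | add p q _ _ hp hq =>
    simp only [map_add, smul_add, Finset.sum_add_distrib]
    rw [hp, hq]
  | smul c p _ hp =>
    have hterm : ∀ i : Fin m,
        (T (i : ℤ) : LaurentPolynomial k) • Dmap m ζ hζ0 σ (i : ℤ) (c • p)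
          = c • ((T (i : ℤ) : LaurentPolynomial k) • Dmap m ζ hζ0 σ (i : ℤ) p) := by
      intro i
      rw [map_smul, smul_comm]
    rw [Finset.sum_congr rfl fun i _ => hterm i, ← Finset.smul_sum, hp]

theorem Dmap_T_smul (m : ℕ) (hm : 0 < m) {ζ : k} (hζ : IsPrimitiveRoot ζ m) [CharZero k]
    (hζ0 : ζ ≠ 0) {σ : g ≃ₗ[k] g} {y : LaurentPolynomial k ⊗[k] g}
    (hy : y ∈ loopCarrier ζ σ) (i j : ℤ) :
    Dmap m ζ hζ0 σ j ((T i : LaurentPolynomial k) • y)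
      = if ((i : ZMod m) = (j : ZMod m)) then (T (i - j) : LaurentPolynomial k) • y
        else 0 := by
  induction hy using Submodule.span_induction with
  | mem p hp =>
    obtain ⟨n, v, hv, rfl⟩ := hp
    rw [TensorProduct.smul_tmul', smul_eq_mul, ← T_add, Dmap_tmul,
      piAux_of_eigen m hm hζ hv (i + n - j)]
    have hcond : (((i + n - j : ℤ) : ZMod m) = ((n : ℤ) : ZMod m))
        ↔ ((i : ZMod m) = (j : ZMod m)) := by
      push_cast
      constructor <;> intro h <;> linear_combination h
    by_cases hc : ((i : ZMod m) = (j : ZMod m))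
    · rw [if_pos (hcond.mpr hc), if_pos hc, TensorProduct.smul_tmul', smul_eq_mul, ← T_add]
      have : i - j + n = i + n - j := by ring
      rw [this]
    · rw [if_neg (fun h => hc (hcond.mp h)), if_neg hc, TensorProduct.tmul_zero]
  | zero => rw [smul_zero, map_zero, smul_zero, ite_self]
  | add p q _ _ hp hq =>
    rw [smul_add, map_add, hp, hq]
    by_cases hc : ((i : ZMod m) = (j : ZMod m)) <;> simp [hc]
  | smul c p _ hp =>
    rw [smul_comm, map_smul, hp]
    by_cases hc : ((i : ZMod m) = (j : ZMod m)) <;> simp [hc, smul_comm c]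

theorem decomp_eq (m : ℕ) (hm : 0 < m) {ζ : k} (hζ : IsPrimitiveRoot ζ m) [CharZero k]
    (hζ0 : ζ ≠ 0) {σ : g ≃ₗ[k] g} (y : Fin m → LaurentPolynomial k ⊗[k] g)
    (hmem : ∀ i, y i ∈ loopCarrier ζ σ) (x : LaurentPolynomial k ⊗[k] g)
    (hx : x = ∑ i : Fin m, (T (i : ℤ) : LaurentPolynomial k) • y i) (j : Fin m) :
    y j = Dmap m ζ hζ0 σ (j : ℤ) x := by
  subst hx
  rw [map_sum,
    Finset.sum_congr rfl fun i _ => Dmap_T_smul m hm hζ hζ0 (hmem i) (i : ℤ) (j : ℤ),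
    Finset.sum_eq_single j ?h1 ?h2]
  · rw [if_pos rfl, sub_self, T_zero, one_smul]
  case h1 =>
    intro i _ hij
    rw [if_neg]
    intro h
    apply hij
    have h' : ((i : ℕ) : ZMod m) = ((j : ℕ) : ZMod m) := by push_cast at h ⊢; exact_mod_cast h
    have hmod := (ZMod.natCast_eq_natCast_iff _ _ _).mp h'
    have hi := i.isLt
    have hj := j.isLt
    unfold Nat.ModEq at hmod
    rw [Nat.mod_eq_of_lt hi, Nat.mod_eq_of_lt hj] at hmod
    exact Fin.ext hmod
  case h2 =>
    intro h
    exact absurd (Finset.mem_univ j) h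

theorem T_mul_mem_Rsub (m : ℕ) (q : ℤ) :
    (T ((m : ℤ) * q) : LaurentPolynomial k) ∈ Rsub k m := by
  have h1 : (T ((m : ℕ) : ℤ) : LaurentPolynomial k) ∈ Rsub k m :=
    Algebra.subset_adjoin (Set.mem_insert _ _)
  have h2 : (T (-((m : ℕ) : ℤ)) : LaurentPolynomial k) ∈ Rsub k m :=
    Algebra.subset_adjoin (Set.mem_insert_of_mem _ rfl)
  rcases le_or_gt 0 q with hq | hq
  · obtain ⟨a, rfl⟩ := Int.eq_ofNat_of_zero_le hq
    have hTa : (T ((m : ℤ) * (a : ℤ)) : LaurentPolynomial k) = T ((m : ℤ)) ^ a := by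
      rw [T_pow]
      congr 1
      ring
    rw [hTa]
    exact pow_mem h1 a
  · have ha : (0 : ℤ) ≤ -q := by omega
    obtain ⟨a, haa⟩ := Int.eq_ofNat_of_zero_le ha
    have hqa : q = -(a : ℤ) := by omega
    have hTa : (T ((m : ℤ) * q) : LaurentPolynomial k) = T (-((m : ℤ))) ^ a := by
      rw [T_pow]
      congr 1
      rw [hqa]
      ring
    rw [hTa]
    exact pow_mem h2 a

theorem exists_repr (m : ℕ) (hm : 0 < m) {ζ : k} (hζ : IsPrimitiveRoot ζ m) [CharZero k]
    (σ : g ≃ₗ[k] g) (hbr : IsLieAut σ) (hσ : σ ^ m = 1)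
    (w : LaurentPolynomial k ⊗[↥(Rsub k m)]
      ↥(loopAlgebra m ζ (hζ.ne_zero hm.ne') hζ.pow_eq_one σ hbr hσ)) :
    ∃ y : Fin m → ↥(loopAlgebra m ζ (hζ.ne_zero hm.ne') hζ.pow_eq_one σ hbr hσ),
      w = ∑ i : Fin m, (T (i : ℤ) : LaurentPolynomial k) ⊗ₜ[↥(Rsub k m)] y i := by
  induction w using TensorProduct.induction_on with
  | zero =>
    refine ⟨0, ?_⟩
    simp
  | add p q hp hq =>
    obtain ⟨yp, rfl⟩ := hp
    obtain ⟨yq, rfl⟩ := hq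
    refine ⟨yp + yq, ?_⟩
    rw [← Finset.sum_add_distrib]
    exact Finset.sum_congr rfl fun i _ => (TensorProduct.tmul_add _ _ _).symm
  | tmul s y =>
    induction s using AddMonoidAlgebra.induction_on generalizing y with
    | of n =>
      have hofT : ((AddMonoidAlgebra.of k ℤ) (Multiplicative.ofAdd n) : LaurentPolynomial k)
          = T n := rfl
      rw [hofT]
      have hm' : (0 : ℤ) < (m : ℤ) := by exact_mod_cast hm
      have hmod0 : 0 ≤ n % (m : ℤ) := Int.emod_nonneg n hm'.ne'
      have hmodlt : n % (m : ℤ) < (m : ℤ) := Int.emod_lt_of_pos n hm'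
      refine ⟨fun j => if j = (⟨(n % (m : ℤ)).toNat, by omega⟩ : Fin m)
        then (⟨T ((m : ℤ) * (n / (m : ℤ))), T_mul_mem_Rsub m _⟩ : ↥(Rsub k m)) • y else 0, ?_⟩
      set i0 : Fin m := ⟨(n % (m : ℤ)).toNat, by omega⟩ with hi0
      set r' : ↥(Rsub k m) := ⟨T ((m : ℤ) * (n / (m : ℤ))), T_mul_mem_Rsub m _⟩ with hr'
      have hi0z : ((i0 : ℕ) : ℤ) = n % (m : ℤ) := Int.toNat_of_nonneg hmod0
      have hT : (T n : LaurentPolynomial k) = r' • T ((i0 : ℤ)) := by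
        rw [Subalgebra.smul_def, hr', hi0z, smul_eq_mul, ← T_add, Int.mul_ediv_add_emod]
      rw [hT, TensorProduct.smul_tmul,
        Finset.sum_eq_single i0
          (fun b _ hb => by simp only [if_neg hb, TensorProduct.tmul_zero])
          (fun h => absurd (Finset.mem_univ i0) h)]
      simp
    | add f h hf hh =>
      obtain ⟨yf, hyf⟩ := hf y
      obtain ⟨yh, hyh⟩ := hh y
      refine ⟨yf + yh, ?_⟩
      rw [TensorProduct.add_tmul, hyf, hyh, ← Finset.sum_add_distrib]
      exact Finset.sum_congr rfl fun i _ => (TensorProduct.tmul_add _ _ _).symm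
    | smul r f hf =>
      have hrmem : algebraMap k (LaurentPolynomial k) r ∈ Rsub k m :=
        Subalgebra.algebraMap_mem _ r
      have hsm : (r • f) ⊗ₜ[↥(Rsub k m)] y
          = f ⊗ₜ[↥(Rsub k m)] ((⟨algebraMap k (LaurentPolynomial k) r, hrmem⟩ : ↥(Rsub k m)) • y) := by
        rw [← TensorProduct.smul_tmul, Subalgebra.smul_def, algebraMap_smul]
      rw [hsm]
      exact hf _

end Proof5

/-- Every element of `g(S)` is uniquely of the form
`Σ_{i=0}^{m-1} z^i y_i` with `y_i ∈ L(g,σ)`; consequently the `S`-linear map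
`S ⊗_R L(g,σ) → g(S)`, `s ⊗ y ↦ s·y`, is an isomorphism of Lie algebras over `S`,
i.e. `L(g,σ)` is an `S/R` form of `g(R)`. -/
theorem statement5 {k : Type*} [Field k] [CharZero k] {g : Type*} [LieRing g] [LieAlgebra k g]
    (m : ℕ) (hm : 0 < m) (ζ : k) (hζ : IsPrimitiveRoot ζ m)
    (σ : g ≃ₗ[k] g) (hbr : IsLieAut σ) (hσ : σ ^ m = 1) :
    (∀ x : LaurentPolynomial k ⊗[k] g,
      ∃! y : Fin m → LaurentPolynomial k ⊗[k] g,
        (∀ i, y i ∈ loopAlgebra m ζ (hζ.ne_zero hm.ne') hζ.pow_eq_one σ hbr hσ) ∧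
          x = ∑ i : Fin m, ((T (i : ℤ) : LaurentPolynomial k) • y i)) ∧
    (∀ (s : LaurentPolynomial k)
        (y : ↥(loopAlgebra m ζ (hζ.ne_zero hm.ne') hζ.pow_eq_one σ hbr hσ)),
      LinearMap.liftBaseChange (LaurentPolynomial k)
          (loopIncl m ζ (hζ.ne_zero hm.ne') hζ.pow_eq_one σ hbr hσ)
          (s ⊗ₜ[↥(Rsub k m)] y)
        = s • (y : LaurentPolynomial k ⊗[k] g)) ∧
    Function.Bijective
      (LinearMap.liftBaseChange (LaurentPolynomial k)
        (loopIncl m ζ (hζ.ne_zero hm.ne') hζ.pow_eq_one σ hbr hσ)) := by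
  refine ⟨?_, ?_, ?_, ?_⟩
  · -- part 1: unique decomposition
    intro x
    refine ⟨fun i => Dmap m ζ (hζ.ne_zero hm.ne') σ (i : ℤ) x, ⟨?_, ?_⟩, ?_⟩
    · intro i
      exact mem_loopAlgebra_iff.mpr
        (Dmap_mem_loop m hm hζ (hζ.ne_zero hm.ne') hσ (i : ℤ) x)
    · exact (sum_T_Dmap m hm hζ (hζ.ne_zero hm.ne') σ x).symm
    · rintro y' ⟨hmem', hsum'⟩
      funext j
      exact decomp_eq m hm hζ (hζ.ne_zero hm.ne') y'
        (fun i => mem_loopAlgebra_iff.mp (hmem' i)) x hsum' j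
  · -- part 2: the base-change map on simple tensors
    intro s y
    exact LinearMap.liftBaseChange_tmul _ _ s y
  · -- part 3a: injective
    have hker : ∀ w, LinearMap.liftBaseChange (LaurentPolynomial k)
        (loopIncl m ζ (hζ.ne_zero hm.ne') hζ.pow_eq_one σ hbr hσ) w = 0 → w = 0 := by
      intro w hw
      obtain ⟨y, rfl⟩ := exists_repr m hm hζ σ hbr hσ w
      have hmap : LinearMap.liftBaseChange (LaurentPolynomial k)
          (loopIncl m ζ (hζ.ne_zero hm.ne') hζ.pow_eq_one σ hbr hσ)
          (∑ i : Fin m, (T (i : ℤ) : LaurentPolynomial k) ⊗ₜ[↥(Rsub k m)] y i)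
          = ∑ i : Fin m, (T (i : ℤ) : LaurentPolynomial k)
              • ((y i : LaurentPolynomial k ⊗[k] g)) := by
        rw [map_sum]
        exact Finset.sum_congr rfl fun i _ =>
          LinearMap.liftBaseChange_tmul _ (loopIncl m ζ (hζ.ne_zero hm.ne') hζ.pow_eq_one σ hbr hσ) (T (i : ℤ)) (y i)
      rw [hmap] at hw
      have hzero : ∀ j : Fin m, ((y j : LaurentPolynomial k ⊗[k] g)) = 0 := by
        intro j
        have hde := decomp_eq m hm hζ (hζ.ne_zero hm.ne')
          (fun i => (y i : LaurentPolynomial k ⊗[k] g))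
          (fun i => mem_loopAlgebra_iff.mp (y i).2) 0 hw.symm j
        rw [hde, map_zero]
      calc ∑ i : Fin m, (T (i : ℤ) : LaurentPolynomial k) ⊗ₜ[↥(Rsub k m)] y i
          = ∑ _i : Fin m, (0 : LaurentPolynomial k ⊗[↥(Rsub k m)]
              ↥(loopAlgebra m ζ (hζ.ne_zero hm.ne') hζ.pow_eq_one σ hbr hσ)) :=
            Finset.sum_congr rfl fun i _ => by
              rw [ZeroMemClass.coe_eq_zero.mp (hzero i), TensorProduct.tmul_zero]
        _ = 0 := Finset.sum_const_zero
    intro a b hab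
    exact sub_eq_zero.mp (hker (a - b) (by rw [map_sub, hab, sub_self]))
  · -- part 3b: surjective
    intro x
    refine ⟨∑ i : Fin m, (T (i : ℤ) : LaurentPolynomial k) ⊗ₜ[↥(Rsub k m)]
      (⟨Dmap m ζ (hζ.ne_zero hm.ne') σ (i : ℤ) x,
        Dmap_mem_loop m hm hζ (hζ.ne_zero hm.ne') hσ (i : ℤ) x⟩ :
        ↥(loopAlgebra m ζ (hζ.ne_zero hm.ne') hζ.pow_eq_one σ hbr hσ)), ?_⟩
    rw [map_sum]
    have hstep : ∀ i : Fin m, (LinearMap.liftBaseChange (LaurentPolynomial k) (loopIncl m ζ (hζ.ne_zero hm.ne') hζ.pow_eq_one σ hbr hσ))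
        ((T (i : ℤ) : LaurentPolynomial k) ⊗ₜ[↥(Rsub k m)]
          (⟨Dmap m ζ (hζ.ne_zero hm.ne') σ (i : ℤ) x,
            Dmap_mem_loop m hm hζ (hζ.ne_zero hm.ne') hσ (i : ℤ) x⟩ :
            ↥(loopAlgebra m ζ (hζ.ne_zero hm.ne') hζ.pow_eq_one σ hbr hσ)))
          = (T (i : ℤ) : LaurentPolynomial k) • Dmap m ζ (hζ.ne_zero hm.ne') σ (i : ℤ) x :=
      fun i => LinearMap.liftBaseChange_tmul _ _ _ _
    rw [Finset.sum_congr rfl fun i _ => hstep i]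
    exact sum_T_Dmap m hm hζ (hζ.ne_zero hm.ne') σ x


end LoopPaper
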